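/- Let 0 < k < 1 and δ ∈ {1,-1}. Then the function u(t,x) = c1 + c2·e^{-x} - (1 + e^{-x}/k)·t + (δ/k)·[(k - e^{-x}/2)·x - 3√(k(k + e^{-x})) + (2k - e^{-x})·log(√k + √(k + e^{-x}))] satisfies the PDE u_t + (u_x + u_xx)^2 = 0 on ℝ × ℝ. -/

import Mathlib

theorem stmt6 (k δ c1 c2 : ℝ)
    (hk : 0 < k)
    (hk1 : k < 1)
    (hδ : δ = 1 ∨ δ = -1)
    (u : ℝ → ℝ → ℝ)
    (hu : ∀ t x : ℝ, u t x = c1 + c2 * Real.exp (-x) - (1 + Real.exp (-x) / k) * t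
      + (δ / k) * ((k - Real.exp (-x) / 2) * x - 3 * Real.sqrt (k * (k + Real.exp (-x)))
        + (2 * k - Real.exp (-x)) * Real.log (Real.sqrt k + Real.sqrt (k + Real.exp (-x))))) :
    ∀ t x : ℝ,
      deriv (fun s => u s x) t
      + (deriv (fun y => u t y) x
         + deriv (fun y => deriv (fun z => u t z) y) x) ^ 2 = 0 := by
  intro t x
  -- notation
  have hkpos : (0:ℝ) < k := hk
  have hE : ∀ y : ℝ, (0:ℝ) < Real.exp (-y) := fun y => Real.exp_pos _
  have hWpos : ∀ y : ℝ, (0:ℝ) < Real.sqrt (k + Real.exp (-y)) := fun y =>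
    Real.sqrt_pos.mpr (by positivity)
  have hSKpos : (0:ℝ) < Real.sqrt k := Real.sqrt_pos.mpr hk
  have hSKW : ∀ y : ℝ, (0:ℝ) < Real.sqrt k + Real.sqrt (k + Real.exp (-y)) := fun y =>
    add_pos hSKpos (hWpos y)
  have hSK2 : Real.sqrt k ^ 2 = k := Real.sq_sqrt hk.le
  have hW2 : ∀ y : ℝ, Real.sqrt (k + Real.exp (-y)) ^ 2 = k + Real.exp (-y) := fun y =>
    Real.sq_sqrt (by positivity)
  -- rewrite sqrt(k*(k+E)) = sqrt k * sqrt(k+E)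
  have hu' : ∀ t x : ℝ, u t x = c1 + c2 * Real.exp (-x) - (1 + Real.exp (-x) / k) * t
      + (δ / k) * ((k - Real.exp (-x) / 2) * x
        - 3 * (Real.sqrt k * Real.sqrt (k + Real.exp (-x)))
        + (2 * k - Real.exp (-x)) * Real.log (Real.sqrt k + Real.sqrt (k + Real.exp (-x)))) := by
    intro t x
    rw [hu, Real.sqrt_mul hk.le]
  -- derivative of exp(-y)
  have hEder : ∀ y : ℝ, HasDerivAt (fun z : ℝ => Real.exp (-z)) (-Real.exp (-y)) y := by
    intro y
    simpa using ((hasDerivAt_neg y).exp)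
  have hWder : ∀ y : ℝ, HasDerivAt (fun z : ℝ => Real.sqrt (k + Real.exp (-z)))
      (-Real.exp (-y) / (2 * Real.sqrt (k + Real.exp (-y)))) y := by
    intro y
    have := ((hasDerivAt_const y k).add (hEder y)).sqrt (by show k + Real.exp (-y) ≠ 0; positivity)
    simpa using this
  have hLder : ∀ y : ℝ, HasDerivAt
      (fun z : ℝ => Real.log (Real.sqrt k + Real.sqrt (k + Real.exp (-z))))
      ((-Real.exp (-y) / (2 * Real.sqrt (k + Real.exp (-y))))
        / (Real.sqrt k + Real.sqrt (k + Real.exp (-y)))) y := by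
    intro y
    have := ((hasDerivAt_const y (Real.sqrt k)).add (hWder y)).log (ne_of_gt (hSKW y))
    simpa using this
  -- simplified log derivative
  have hLder' : ∀ y : ℝ, HasDerivAt
      (fun z : ℝ => Real.log (Real.sqrt k + Real.sqrt (k + Real.exp (-z))))
      (Real.sqrt k / (2 * Real.sqrt (k + Real.exp (-y))) - 1/2) y := by
    intro y
    have h := hLder y
    convert h using 1
    have hw := hWpos y
    have hskw := hSKW y
    field_simp
    nlinarith [hW2 y, hSK2, hw, hskw]
  -- first spatial derivative
  set D1 : ℝ → ℝ := fun y => -(c2 * Real.exp (-y)) + t * Real.exp (-y) / k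
      + (δ / k) * (Real.exp (-y) / 2 * y
        + Real.sqrt k * Real.sqrt (k + Real.exp (-y))
        + Real.exp (-y) * Real.log (Real.sqrt k + Real.sqrt (k + Real.exp (-y)))) with hD1def
  have hD1 : ∀ y : ℝ, HasDerivAt (fun z => u t z) (D1 y) y := by
    intro y
    have h1 : HasDerivAt (fun z : ℝ => c2 * Real.exp (-z)) (c2 * -Real.exp (-y)) y :=
      (hEder y).const_mul c2
    have h2 : HasDerivAt (fun z : ℝ => (1 + Real.exp (-z) / k) * t)
        ((0 + -Real.exp (-y) / k) * t) y :=
      ((hasDerivAt_const y (1:ℝ)).add ((hEder y).div_const k)).mul_const t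
    have h3 : HasDerivAt (fun z : ℝ => (k - Real.exp (-z) / 2) * z)
        ((0 - -Real.exp (-y) / 2) * y + (k - Real.exp (-y) / 2) * 1) y :=
      ((hasDerivAt_const y k).sub ((hEder y).div_const 2)).mul (hasDerivAt_id y)
    have h4 : HasDerivAt (fun z : ℝ => 3 * (Real.sqrt k * Real.sqrt (k + Real.exp (-z))))
        (3 * (Real.sqrt k * (-Real.exp (-y) / (2 * Real.sqrt (k + Real.exp (-y)))))) y :=
      ((hWder y).const_mul (Real.sqrt k)).const_mul 3
    have h5 : HasDerivAt (fun z : ℝ => (2 * k - Real.exp (-z))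
          * Real.log (Real.sqrt k + Real.sqrt (k + Real.exp (-z))))
        ((0 - -Real.exp (-y)) * Real.log (Real.sqrt k + Real.sqrt (k + Real.exp (-y)))
          + (2 * k - Real.exp (-y)) * (Real.sqrt k / (2 * Real.sqrt (k + Real.exp (-y))) - 1/2)) y :=
      ((hasDerivAt_const y (2*k)).sub (hEder y)).mul (hLder' y)
    have hall := (((hasDerivAt_const y c1).add h1).sub h2).add
      (((h3.sub h4).add h5).const_mul (δ / k))
    have heq : (fun z => u t z) = fun z => c1 + c2 * Real.exp (-z)
        - (1 + Real.exp (-z) / k) * t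
        + (δ / k) * ((k - Real.exp (-z) / 2) * z
          - 3 * (Real.sqrt k * Real.sqrt (k + Real.exp (-z)))
          + (2 * k - Real.exp (-z)) * Real.log (Real.sqrt k + Real.sqrt (k + Real.exp (-z)))) := by
      funext z; exact hu' t z
    rw [heq]
    refine hall.congr_deriv ?_
    symm
    have hw := hWpos y
    set W := Real.sqrt (k + Real.exp (-y))
    set SK := Real.sqrt k
    set L := Real.log (SK + W)
    set E := Real.exp (-y)
    rw [hD1def]
    have hdivW : (k + E) / W = W := by
      rw [← hW2 y, pow_two, mul_div_assoc, div_self (ne_of_gt hw), mul_one]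
    have hkey : 3 * SK * E / (2 * W) + (2 * k - E) * (SK / (2 * W)) = SK * W := by
      have h : 3 * SK * E / (2 * W) + (2 * k - E) * (SK / (2 * W))
          = SK * ((k + E) / W) := by
        field_simp
        ring
      rw [h, hdivW]
    linear_combination (δ / k) * hkey - (2 * δ * SK / k) * hdivW
  -- second spatial derivative value
  have hD2 : HasDerivAt D1
      (c2 * Real.exp (-x) - t * Real.exp (-x) / k
        + (δ / k) * (-(Real.exp (-x) / 2) * x
          - Real.exp (-x) * Real.log (Real.sqrt k + Real.sqrt (k + Real.exp (-x))))) x := by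
    have h1 : HasDerivAt (fun z : ℝ => -(c2 * Real.exp (-z))) (-(c2 * -Real.exp (-x))) x :=
      ((hEder x).const_mul c2).neg
    have h2 : HasDerivAt (fun z : ℝ => t * Real.exp (-z) / k)
        (t * -Real.exp (-x) / k) x := (((hEder x).const_mul t).div_const k)
    have h3 : HasDerivAt (fun z : ℝ => Real.exp (-z) / 2 * z)
        (-Real.exp (-x) / 2 * x + Real.exp (-x) / 2 * 1) x :=
      (((hEder x).div_const 2).mul (hasDerivAt_id x))
    have h4 : HasDerivAt (fun z : ℝ => Real.sqrt k * Real.sqrt (k + Real.exp (-z)))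
        (Real.sqrt k * (-Real.exp (-x) / (2 * Real.sqrt (k + Real.exp (-x))))) x :=
      (hWder x).const_mul (Real.sqrt k)
    have h5 : HasDerivAt (fun z : ℝ => Real.exp (-z)
          * Real.log (Real.sqrt k + Real.sqrt (k + Real.exp (-z))))
        (-Real.exp (-x) * Real.log (Real.sqrt k + Real.sqrt (k + Real.exp (-x)))
          + Real.exp (-x) * (Real.sqrt k / (2 * Real.sqrt (k + Real.exp (-x))) - 1/2)) x :=
      (hEder x).mul (hLder' x)
    have hall := (h1.add h2).add (((h3.add h4).add h5).const_mul (δ / k))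
    rw [hD1def]
    refine hall.congr_deriv ?_
    symm
    have hw := hWpos x
    set W := Real.sqrt (k + Real.exp (-x))
    set SK := Real.sqrt k
    set L := Real.log (SK + W)
    set E := Real.exp (-x)
    field_simp
    ring
  -- time derivative
  have hTder : HasDerivAt (fun s => u s x) (-(1 + Real.exp (-x) / k)) t := by
    have heq : (fun s => u s x) = fun s => (c1 + c2 * Real.exp (-x)
        + (δ / k) * ((k - Real.exp (-x) / 2) * x - 3 * Real.sqrt (k * (k + Real.exp (-x)))
          + (2 * k - Real.exp (-x)) * Real.log (Real.sqrt k + Real.sqrt (k + Real.exp (-x)))))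
        - (1 + Real.exp (-x) / k) * s := by
      funext s; rw [hu]; ring
    rw [heq]
    have := (hasDerivAt_const t (c1 + c2 * Real.exp (-x)
        + (δ / k) * ((k - Real.exp (-x) / 2) * x - 3 * Real.sqrt (k * (k + Real.exp (-x)))
          + (2 * k - Real.exp (-x)) * Real.log (Real.sqrt k + Real.sqrt (k + Real.exp (-x)))))).sub
      ((hasDerivAt_id t).const_mul (1 + Real.exp (-x) / k))
    exact this.congr_deriv (by ring)
  -- assemble
  have e1 : deriv (fun s => u s x) t = -(1 + Real.exp (-x) / k) := hTder.deriv
  have e2 : deriv (fun y => u t y) x = D1 x := (hD1 x).deriv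
  have ederiv : (fun y => deriv (fun z => u t z) y) = D1 := by
    funext y; exact (hD1 y).deriv
  have e3 : deriv (fun y => deriv (fun z => u t z) y) x
      = (c2 * Real.exp (-x) - t * Real.exp (-x) / k
        + (δ / k) * (-(Real.exp (-x) / 2) * x
          - Real.exp (-x) * Real.log (Real.sqrt k + Real.sqrt (k + Real.exp (-x))))) := by
    rw [ederiv]; exact hD2.deriv
  rw [e1, e2, e3, hD1def]
  have hw := hWpos x
  have hW2x := hW2 x
  have hkne : k ≠ 0 := ne_of_gt hk
  set W := Real.sqrt (k + Real.exp (-x))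
  set SK := Real.sqrt k
  set L := Real.log (SK + W)
  set E := Real.exp (-x)
  have hsum : -(c2 * E) + t * E / k + δ / k * (E / 2 * x + SK * W + E * L)
      + (c2 * E - t * E / k + δ / k * (-(E / 2) * x - E * L)) = δ / k * (SK * W) := by
    field_simp
    ring
  rw [hsum]
  have hδ2 : δ ^ 2 = 1 := by rcases hδ with h | h <;> simp [h]
  have : (δ / k * (SK * W)) ^ 2 = (k + E) / k := by
    have : (δ / k * (SK * W)) ^ 2 = δ ^ 2 * (SK ^ 2 * W ^ 2) / k ^ 2 := by ring
    rw [this, hδ2, hSK2, hW2x]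
    field_simp
  rw [this]
  field_simp
  ring
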